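/- Let K be a cone field on a topological real vector bundle (E,p,M) over a paracompact topological manifold M without boundary, and let ζ be a continuous section of E with ζ(x) ∈ Int(K(x)) for every x ∈ M. Then for each ζ-measurable section σ the minimum |σ|⁰_ζ := min{λ ∈ ℝ₊ : −λζ ≤ σ ≤ λζ} is attained, and the map σ ↦ |σ|⁰_ζ is a norm on the real vector space Γ⁰_ζ of ζ-measurable continuous sections. -/
import Mathlib


open Bundle Topology Set

/-- A *cone field* on a topological real vector bundle `(E, p, M)`:
to each `x ∈ M` it assigns a subset `K x` of the fiber `E x` such that
(K1) each `K x` is a convex cone, closed in the fiber, pointed and solid, and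
(K2) the union of the fiberwise interiors and the union of the fiberwise
complements are open in the total space. -/
structure IsConeField (F : Type*) [NormedAddCommGroup F] [NormedSpace ℝ F]
    {M : Type*} [TopologicalSpace M]
    (E : M → Type*) [∀ x, AddCommGroup (E x)] [∀ x, Module ℝ (E x)]
    [∀ x, TopologicalSpace (E x)] [TopologicalSpace (Bundle.TotalSpace F E)]
    [FiberBundle F E] [VectorBundle ℝ F E]
    (K : ∀ x, Set (E x)) : Prop where
  add_mem : ∀ x, ∀ v ∈ K x, ∀ w ∈ K x, v + w ∈ K x
  smul_mem : ∀ x, ∀ c : ℝ, 0 ≤ c → ∀ v ∈ K x, c • v ∈ K x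
  isClosed : ∀ x, IsClosed (K x)
  pointed : ∀ x, K x ∩ -(K x) = {0}
  solid : ∀ x, (interior (K x)).Nonempty
  isOpen_int : IsOpen {p : Bundle.TotalSpace F E | p.2 ∈ interior (K p.proj)}
  isOpen_compl : IsOpen {p : Bundle.TotalSpace F E | p.2 ∉ K p.proj}

variable (F : Type*) [NormedAddCommGroup F] [NormedSpace ℝ F]
  {M : Type*} [TopologicalSpace M]
  (E : M → Type*) [∀ x, AddCommGroup (E x)] [∀ x, Module ℝ (E x)]
  [∀ x, TopologicalSpace (E x)] [TopologicalSpace (Bundle.TotalSpace F E)]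
  [FiberBundle F E] [VectorBundle ℝ F E]

/-- A (set-theoretic) section `σ` of the bundle is a *continuous section*
if `x ↦ (x, σ x)` is continuous into the total space. -/
def IsContSection (σ : ∀ x, E x) : Prop :=
  Continuous (fun x => (⟨x, σ x⟩ : Bundle.TotalSpace F E))

variable {F E} in
/-- `σ` is a *positive section* for the cone field `K` if `σ x ∈ K x` for all `x`. -/
def IsPosSection (K : ∀ x, Set (E x)) (σ : ∀ x, E x) : Prop :=
  ∀ x, σ x ∈ K x

variable {F E} in
/-- The order relation on sections induced by the cone of positive sections:
`σ₁ ≤ σ₂` iff `σ₂ - σ₁` is a positive section. -/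
def ConeLE (K : ∀ x, Set (E x)) (σ₁ σ₂ : ∀ x, E x) : Prop :=
  ∀ x, σ₂ x - σ₁ x ∈ K x

variable {F E} in
/-- `σ` is *`ζ`-measurable*: there is `λ ≥ 0` with `-λ ζ ≤ σ ≤ λ ζ` in the cone order. -/
def IsZetaMeas (K : ∀ x, Set (E x)) (ζ σ : ∀ x, E x) : Prop :=
  ∃ lam : ℝ, 0 ≤ lam ∧ ConeLE K (fun x => (-lam) • ζ x) σ ∧ ConeLE K σ (fun x => lam • ζ x)

variable {F E} in
/-- The norm `|σ|⁰_ζ = min {λ ≥ 0 | -λζ ≤ σ ≤ λζ}` (as an infimum; the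
minimum is attained, see the corresponding statement). -/
noncomputable def zetaNorm (K : ∀ x, Set (E x)) (ζ σ : ∀ x, E x) : ℝ :=
  sInf {lam : ℝ | 0 ≤ lam ∧ ConeLE K (fun x => (-lam) • ζ x) σ ∧ ConeLE K σ (fun x => lam • ζ x)}

/-- The graph (Whitney `C⁰`) topology `WO⁰`, generated by the sets
`W(U) = {σ | ∀ x, (x, σ x) ∈ U}` for `U` open in the total space. -/
def WO0 : TopologicalSpace (∀ x, E x) :=
  TopologicalSpace.generateFrom
    {S | ∃ U : Set (Bundle.TotalSpace F E), IsOpen U ∧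
      S = {σ : ∀ x, E x | ∀ x, (⟨x, σ x⟩ : Bundle.TotalSpace F E) ∈ U}}

/-- The space `Γ⁰(E)` of continuous sections of the bundle. -/
def ContSection : Type _ := {σ : ∀ x, E x // IsContSection F E σ}

variable {F E} in
include F in
/-- In each fiber, affine maps from `ℝ` are continuous (via a trivialization). -/
lemma continuous_fiber_affine (x : M) (v w : E x) :
    Continuous (fun lam : ℝ => lam • v + w) := by
  let e := trivializationAt F E x
  have hx : x ∈ e.baseSet := FiberBundle.mem_baseSet_trivializationAt F E x
  let L := e.continuousLinearEquivAt ℝ x hx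
  have heq : (fun lam : ℝ => lam • v + w) = fun lam : ℝ => L.symm (lam • L v + L w) := by
    funext lam
    have : L (lam • v + w) = lam • L v + L w := by simp
    rw [← this, ContinuousLinearEquiv.symm_apply_apply]
  rw [heq]
  exact L.symm.continuous.comp ((continuous_id.smul continuous_const).add continuous_const)

variable {F E} in
lemma isClosed_zetaSet (K : ∀ x, Set (E x)) (hK : IsConeField F E K) (ζ σ : ∀ x, E x) :
    IsClosed {lam : ℝ | 0 ≤ lam ∧ ConeLE K (fun x => (-lam) • ζ x) σ ∧
      ConeLE K σ (fun x => lam • ζ x)} := by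
  have hset : {lam : ℝ | 0 ≤ lam ∧ ConeLE K (fun x => (-lam) • ζ x) σ ∧
      ConeLE K σ (fun x => lam • ζ x)}
      = Set.Ici (0 : ℝ) ∩ ((⋂ x, (fun lam : ℝ => lam • ζ x + σ x) ⁻¹' K x) ∩
        ⋂ x, (fun lam : ℝ => lam • ζ x + (-σ x)) ⁻¹' K x) := by
    ext lam
    simp only [Set.mem_setOf_eq, Set.mem_inter_iff, Set.mem_Ici, Set.mem_iInter,
      Set.mem_preimage, ConeLE, neg_smul, sub_neg_eq_add, sub_eq_add_neg, neg_neg]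
    constructor
    · rintro ⟨h0, h1, h2⟩
      exact ⟨h0, fun x => by have := h1 x; rwa [add_comm] at this,
        fun x => h2 x⟩
    · rintro ⟨h0, h1, h2⟩
      exact ⟨h0, fun x => by have := h1 x; rwa [add_comm] at this,
        fun x => h2 x⟩
  rw [hset]
  refine isClosed_Ici.inter (IsClosed.inter ?_ ?_) <;>
    exact isClosed_iInter fun x =>
      (hK.isClosed x).preimage (continuous_fiber_affine (F := F) x _ _)

variable {F E} in
/-- The least element of the admissible set is attained (no continuity of `σ` needed). -/
lemma zetaNorm_isLeast (K : ∀ x, Set (E x)) (hK : IsConeField F E K) (ζ σ : ∀ x, E x)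
    (hmeas : IsZetaMeas K ζ σ) :
    IsLeast {lam : ℝ | 0 ≤ lam ∧ ConeLE K (fun x => (-lam) • ζ x) σ ∧
      ConeLE K σ (fun x => lam • ζ x)} (zetaNorm K ζ σ) := by
  have hbdd : BddBelow {lam : ℝ | 0 ≤ lam ∧ ConeLE K (fun x => (-lam) • ζ x) σ ∧
      ConeLE K σ (fun x => lam • ζ x)} := ⟨0, fun b hb => hb.1⟩
  exact ⟨(isClosed_zetaSet K hK ζ σ).csInf_mem hmeas hbdd, fun b hb => csInf_le hbdd hb⟩

variable {F E} in
/-- Scaling a member of the admissible set of `σ` by `|c|` gives a member for `c • σ`. -/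
lemma zetaSet_scale (K : ∀ x, Set (E x)) (hK : IsConeField F E K) (ζ σ : ∀ x, E x)
    (c lam : ℝ) (h0 : 0 ≤ lam) (h1 : ConeLE K (fun x => (-lam) • ζ x) σ)
    (h2 : ConeLE K σ (fun x => lam • ζ x)) :
    0 ≤ |c| * lam ∧ ConeLE K (fun x => (-(|c| * lam)) • ζ x) (fun x => c • σ x) ∧
      ConeLE K (fun x => c • σ x) (fun x => (|c| * lam) • ζ x) := by
  refine ⟨mul_nonneg (abs_nonneg c) h0, fun x => ?_, fun x => ?_⟩ <;>
    rcases le_or_gt 0 c with hc | hc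
  · rw [abs_of_nonneg hc]
    have heq : c • σ x - (-(c * lam)) • ζ x = c • (σ x - (-lam) • ζ x) := by module
    rw [heq]; exact hK.smul_mem x c hc _ (h1 x)
  · rw [abs_of_neg hc]
    have heq : c • σ x - (-(-c * lam)) • ζ x = (-c) • (lam • ζ x - σ x) := by module
    rw [heq]; exact hK.smul_mem x (-c) (by linarith) _ (h2 x)
  · rw [abs_of_nonneg hc]
    have heq : (c * lam) • ζ x - c • σ x = c • (lam • ζ x - σ x) := by module
    rw [heq]; exact hK.smul_mem x c hc _ (h2 x)
  · rw [abs_of_neg hc]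
    have heq : (-c * lam) • ζ x - c • σ x = (-c) • (σ x - (-lam) • ζ x) := by module
    rw [heq]; exact hK.smul_mem x (-c) (by linarith) _ (h1 x)

/-- For each `ζ`-measurable continuous section `σ`, the minimum
`|σ|⁰_ζ = min {λ ≥ 0 | -λζ ≤ σ ≤ λζ}` is attained, and `σ ↦ |σ|⁰_ζ` is a norm on the
vector space `Γ⁰_ζ` of `ζ`-measurable continuous sections. -/
theorem coneField_zetaNorm_isLeast_and_norm
    {n : ℕ} [ChartedSpace (EuclideanSpace ℝ (Fin n)) M] [T2Space M] [ParacompactSpace M]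
    (K : ∀ x, Set (E x)) (hK : IsConeField F E K)
    (ζ : ∀ x, E x) (hζ : IsContSection F E ζ) (hζK : ∀ x, ζ x ∈ interior (K x)) :
    -- the minimum is attained
    (∀ σ : ∀ x, E x, IsContSection F E σ → IsZetaMeas K ζ σ →
      IsLeast {lam : ℝ | 0 ≤ lam ∧ ConeLE K (fun x => (-lam) • ζ x) σ ∧
        ConeLE K σ (fun x => lam • ζ x)} (zetaNorm K ζ σ)) ∧
    -- the norm of the zero section is zero
    zetaNorm K ζ (fun _ => 0) = 0 ∧
    -- definiteness
    (∀ σ : ∀ x, E x, IsContSection F E σ → IsZetaMeas K ζ σ →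
      zetaNorm K ζ σ = 0 → σ = fun _ => 0) ∧
    -- absolute homogeneity
    (∀ σ : ∀ x, E x, ∀ c : ℝ, IsContSection F E σ → IsZetaMeas K ζ σ →
      zetaNorm K ζ (fun x => c • σ x) = |c| * zetaNorm K ζ σ) ∧
    -- triangle inequality
    (∀ σ τ : ∀ x, E x, IsContSection F E σ → IsContSection F E τ →
      IsZetaMeas K ζ σ → IsZetaMeas K ζ τ →
      zetaNorm K ζ (fun x => σ x + τ x) ≤ zetaNorm K ζ σ + zetaNorm K ζ τ) := by
  have h0K : ∀ x, (0 : E x) ∈ K x := fun x => by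
    have h := hK.pointed x
    have : (0 : E x) ∈ K x ∩ -(K x) := by rw [h]; exact rfl
    exact this.1
  -- the zero section norm
  have hzero : zetaNorm K ζ (fun _ => 0) = 0 := by
    have hL : IsLeast {lam : ℝ | 0 ≤ lam ∧
        ConeLE K (fun x => (-lam) • ζ x) (fun _ => (0 : E _)) ∧
        ConeLE K (fun _ => (0 : E _)) (fun x => lam • ζ x)} 0 := by
      constructor
      · refine ⟨le_refl 0, fun x => ?_, fun x => ?_⟩ <;> simpa using h0K x
      · exact fun b hb => hb.1
    exact hL.csInf_eq
  refine ⟨fun σ _ hmeas => zetaNorm_isLeast K hK ζ σ hmeas, hzero, ?_, ?_, ?_⟩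
  · -- definiteness
    intro σ hσ hmeas hnorm
    have hL := zetaNorm_isLeast K hK ζ σ hmeas
    rw [hnorm] at hL
    obtain ⟨_, h1, h2⟩ := hL.1
    funext x
    have hx1 : σ x ∈ K x := by simpa using h1 x
    have hx2 : -σ x ∈ K x := by simpa using h2 x
    have : σ x ∈ K x ∩ -(K x) := ⟨hx1, by rwa [Set.mem_neg]⟩
    rw [hK.pointed x] at this
    exact this
  · -- absolute homogeneity
    intro σ c hσ hmeas
    rcases eq_or_ne c 0 with rfl | hc
    · have : (fun x => (0 : ℝ) • σ x) = fun _ => (0 : E _) := by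
        funext x; simp
      rw [this, hzero, abs_zero, zero_mul]
    · have hL := zetaNorm_isLeast K hK ζ σ hmeas
      have hcpos : 0 < |c| := abs_pos.2 hc
      have hL' : IsLeast {lam : ℝ | 0 ≤ lam ∧
          ConeLE K (fun x => (-lam) • ζ x) (fun x => c • σ x) ∧
          ConeLE K (fun x => c • σ x) (fun x => lam • ζ x)} (|c| * zetaNorm K ζ σ) := by
        constructor
        · obtain ⟨hm0, hm1, hm2⟩ := hL.1
          exact zetaSet_scale K hK ζ σ c _ hm0 hm1 hm2
        · rintro b ⟨hb0, hb1, hb2⟩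
          have hb' := zetaSet_scale K hK ζ (fun x => c • σ x) c⁻¹ b hb0 hb1 hb2
          have hback : (fun x => c⁻¹ • c • σ x) = σ := by
            funext x; rw [smul_smul, inv_mul_cancel₀ hc, one_smul]
          rw [hback] at hb'
          have hle : zetaNorm K ζ σ ≤ |c⁻¹| * b := hL.2 ⟨hb'.1, hb'.2.1, hb'.2.2⟩
          rw [abs_inv] at hle
          calc |c| * zetaNorm K ζ σ ≤ |c| * (|c|⁻¹ * b) := by
                exact mul_le_mul_of_nonneg_left hle (le_of_lt hcpos)
            _ = b := by field_simp
      exact hL'.csInf_eq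
  · -- triangle inequality
    intro σ τ hσ hτ hmσ hmτ
    have hLσ := zetaNorm_isLeast K hK ζ σ hmσ
    have hLτ := zetaNorm_isLeast K hK ζ τ hmτ
    obtain ⟨ha0, ha1, ha2⟩ := hLσ.1
    obtain ⟨hb0, hb1, hb2⟩ := hLτ.1
    set a := zetaNorm K ζ σ
    set b := zetaNorm K ζ τ
    have hmem : 0 ≤ a + b ∧
        ConeLE K (fun x => (-(a + b)) • ζ x) (fun x => σ x + τ x) ∧
        ConeLE K (fun x => σ x + τ x) (fun x => (a + b) • ζ x) := by
      refine ⟨add_nonneg ha0 hb0, fun x => ?_, fun x => ?_⟩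
      · have heq : (σ x + τ x) - (-(a + b)) • ζ x
            = (σ x - (-a) • ζ x) + (τ x - (-b) • ζ x) := by module
        rw [heq]; exact hK.add_mem x _ (ha1 x) _ (hb1 x)
      · have heq : (a + b) • ζ x - (σ x + τ x)
            = (a • ζ x - σ x) + (b • ζ x - τ x) := by module
        rw [heq]; exact hK.add_mem x _ (ha2 x) _ (hb2 x)
    exact csInf_le ⟨0, fun y hy => hy.1⟩ hmem
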